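/- Let F₂ be the free group on two generators with word metric d. For all x, y, v, w ∈ F₂ and r ∈ ℕ: if v belongs to the flower Fl_x(y,r) (i.e. d(v,y) = r and d(v,x) = r + d(y,x)) and d(x,w) ≤ d(x,y), then d(v,w) = r + d(y,w). In particular, any two elements of the flower Fl_x(y,r) are equidistant from every point w of the closed ball of radius d(x,y) around x. -/

import Mathlib

open FreeGroup List

section Aux

variable {α : Type*} [DecidableEq α]

/-- The no-cancellation relation on letters. -/
private def NC (a b : α × Bool) : Prop := ¬(a.1 = b.1 ∧ a.2 = !b.2)

private lemma reduce_eq_self_of_chain :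
    ∀ {L : List (α × Bool)}, List.Chain' NC L → FreeGroup.reduce L = L := by
  intro L h
  induction L with
  | nil => rfl
  | cons x L ih =>
    replace h := List.isChain_cons.mp h
    rw [FreeGroup.reduce.cons, ih h.2]
    cases L with
    | nil => rfl
    | cons hd tl =>
      have hR : NC x hd := h.1 hd rfl
      simp only [NC] at hR
      exact if_neg hR

private lemma chain'_reduce (L : List (α × Bool)) :
    List.Chain' NC (FreeGroup.reduce L) := by
  induction L with
  | nil => exact List.isChain_nil
  | cons x L ih =>
    rw [FreeGroup.reduce.cons]
    cases hr : FreeGroup.reduce L with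
    | nil => exact List.isChain_singleton _
    | cons hd tl =>
      rw [hr] at ih
      dsimp only
      split_ifs with h
      · exact ih.tail
      · exact List.isChain_cons_cons.2 ⟨h, ih⟩

private lemma chain'_toWord (g : FreeGroup α) : List.Chain' NC g.toWord := by
  rcases g with ⟨L⟩
  rw [FreeGroup.quot_mk_eq_mk, FreeGroup.toWord_mk]
  exact chain'_reduce L

private lemma norm_mk_of_chain {L : List (α × Bool)} (h : List.Chain' NC L) :
    FreeGroup.norm (FreeGroup.mk L) = L.length := by
  have : (FreeGroup.mk L).toWord = L := by
    rw [FreeGroup.toWord_mk, reduce_eq_self_of_chain h]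
  show (FreeGroup.mk L).toWord.length = L.length
  rw [this]

/-- No cancellation: if the reduced words of `g` and `h` have distinct heads then
`|g⁻¹h| = |g| + |h|`. -/
private lemma norm_inv_mul_of_head_ne (g h : FreeGroup α)
    (hne : ∀ p : α × Bool, g.toWord.head? = some p → h.toWord.head? ≠ some p) :
    FreeGroup.norm (g⁻¹ * h) = FreeGroup.norm g + FreeGroup.norm h := by
  have hg : g⁻¹ = FreeGroup.mk (FreeGroup.invRev g.toWord) := by
    rw [← FreeGroup.toWord_inv, FreeGroup.mk_toWord]
  have hmul : g⁻¹ * h = FreeGroup.mk (FreeGroup.invRev g.toWord ++ h.toWord) := by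
    conv_lhs => rw [hg, ← FreeGroup.mk_toWord (x := h)]
    rw [FreeGroup.mul_mk]
  have hredinv : List.Chain' NC (FreeGroup.invRev g.toWord) := by
    have := chain'_toWord g⁻¹
    rwa [FreeGroup.toWord_inv] at this
  have hjun : ∀ a ∈ (FreeGroup.invRev g.toWord).getLast?, ∀ b ∈ h.toWord.head?, NC a b := by
    intro a ha b hb
    have hlast : (FreeGroup.invRev g.toWord).getLast? =
        (g.toWord.map (fun q : α × Bool => (q.1, !q.2))).head? := by
      rw [FreeGroup.invRev, List.getLast?_reverse]
    rw [hlast, List.head?_map] at ha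
    rcases hp : g.toWord.head? with _ | p
    · rw [hp] at ha; simp at ha
    · rw [hp] at ha
      simp only [Option.map_some, Option.mem_def, Option.some.injEq] at ha
      subst ha
      intro hcon
      obtain ⟨h1, h2⟩ := hcon
      simp only at h1 h2
      have h2' : p.2 = b.2 := by
        have := congrArg (fun t => !t) h2
        simpa using this
      have : b = p := by
        apply Prod.ext <;> simp [h1.symm, h2'.symm]
      exact hne p hp (by rw [← this]; exact hb)
  have hchain : List.Chain' NC (FreeGroup.invRev g.toWord ++ h.toWord) :=
    List.isChain_append.2 ⟨hredinv, chain'_toWord h, hjun⟩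
  rw [hmul, norm_mk_of_chain hchain, List.length_append, FreeGroup.invRev_length]
  rfl

/-- Cancellation: if the reduced words of `g` and `h` share the same first letter then
`|g⁻¹h| + 2 ≤ |g| + |h|`. -/
private lemma norm_inv_mul_add_two_le (g h : FreeGroup α) (p : α × Bool)
    (tg th : List (α × Bool)) (hg : g.toWord = p :: tg) (hh : h.toWord = p :: th) :
    FreeGroup.norm (g⁻¹ * h) + 2 ≤ FreeGroup.norm g + FreeGroup.norm h := by
  have hg' : g = FreeGroup.mk [p] * FreeGroup.mk tg := by
    rw [FreeGroup.mul_mk]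
    conv_lhs => rw [← FreeGroup.mk_toWord (x := g), hg]
    rfl
  have hh' : h = FreeGroup.mk [p] * FreeGroup.mk th := by
    rw [FreeGroup.mul_mk]
    conv_lhs => rw [← FreeGroup.mk_toWord (x := h), hh]
    rfl
  have key : g⁻¹ * h = (FreeGroup.mk tg)⁻¹ * FreeGroup.mk th := by
    rw [hg', hh']; group
  have h1 : FreeGroup.norm (g⁻¹ * h) ≤ tg.length + th.length := by
    rw [key]
    calc FreeGroup.norm ((FreeGroup.mk tg)⁻¹ * FreeGroup.mk th)
        ≤ FreeGroup.norm (FreeGroup.mk tg)⁻¹ + FreeGroup.norm (FreeGroup.mk th) :=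
          FreeGroup.norm_mul_le _ _
      _ = FreeGroup.norm (FreeGroup.mk tg) + FreeGroup.norm (FreeGroup.mk th) := by
          rw [FreeGroup.norm_inv_eq]
      _ ≤ tg.length + th.length :=
          Nat.add_le_add FreeGroup.norm_mk_le FreeGroup.norm_mk_le
  have h2 : FreeGroup.norm g = tg.length + 1 := by
    show g.toWord.length = tg.length + 1
    rw [hg]; rfl
  have h3 : FreeGroup.norm h = th.length + 1 := by
    show h.toWord.length = th.length + 1
    rw [hh]; rfl
  omega

private lemma head?_eq_cons {g : FreeGroup α} {p : α × Bool}
    (h : g.toWord.head? = some p) : ∃ t, g.toWord = p :: t := by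
  cases hg : g.toWord with
  | nil => rw [hg] at h; simp at h
  | cons q t =>
    rw [hg] at h
    simp only [List.head?_cons, Option.some.injEq] at h
    exact ⟨t, by rw [h]⟩

end Aux

/-- The left-invariant word metric on the free group on two generators:
`d g h` is the length of the reduced word representing `g⁻¹ * h`. -/
def wordDist (g h : FreeGroup (Fin 2)) : ℕ := FreeGroup.norm (g⁻¹ * h)

/-- The flower `Fl_x(y,r)`: the set of points at distance `r` from `y` whose geodesic to `x`
passes through `y`. -/
def flower (x y : FreeGroup (Fin 2)) (r : ℕ) : Set (FreeGroup (Fin 2)) :=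
  {v | wordDist v y = r ∧ wordDist v x = r + wordDist y x}

/-- **Points of a flower are equidistant from points of the ball.**
If `v ∈ Fl_x(y,r)` and `d(x,w) ≤ d(x,y)` then `d(v,w) = r + d(y,w)`; in particular any two
elements of the flower are equidistant from every point `w` of the closed ball of radius
`d(x,y)` around `x`. -/
theorem flower_equidistant (x y v w : FreeGroup (Fin 2)) (r : ℕ)
    (hv : v ∈ flower x y r) (hw : wordDist x w ≤ wordDist x y) :
    wordDist v w = r + wordDist y w := by
  obtain ⟨h1, h2⟩ := hv
  set a := y⁻¹ * v with ha
  set b := y⁻¹ * x with hb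
  set c := y⁻¹ * w with hc
  have e1 : wordDist v y = FreeGroup.norm a := by
    rw [wordDist, show v⁻¹ * y = a⁻¹ by rw [ha]; group, FreeGroup.norm_inv_eq]
  have e2 : wordDist v x = FreeGroup.norm (a⁻¹ * b) := by
    rw [wordDist, show v⁻¹ * x = a⁻¹ * b by rw [ha, hb]; group]
  have e3 : wordDist y x = FreeGroup.norm b := by rw [wordDist]
  have e4 : wordDist x w = FreeGroup.norm (b⁻¹ * c) := by
    rw [wordDist, show x⁻¹ * w = b⁻¹ * c by rw [hb, hc]; group]
  have e5 : wordDist x y = FreeGroup.norm b := by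
    rw [wordDist, show x⁻¹ * y = b⁻¹ by rw [hb]; group, FreeGroup.norm_inv_eq]
  have e6 : wordDist v w = FreeGroup.norm (a⁻¹ * c) := by
    rw [wordDist, show v⁻¹ * w = a⁻¹ * c by rw [ha, hc]; group]
  have e7 : wordDist y w = FreeGroup.norm c := by rw [wordDist]
  rw [e1] at h1
  rw [e2, e3] at h2
  rw [e4, e5] at hw
  have key : FreeGroup.norm (a⁻¹ * c) = FreeGroup.norm a + FreeGroup.norm c := by
    by_cases hpc : ∃ p, a.toWord.head? = some p ∧ c.toWord.head? = some p
    · obtain ⟨p, hpa, hpcc⟩ := hpc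
      obtain ⟨ta, hta⟩ := head?_eq_cons hpa
      have hbp : b.toWord.head? ≠ some p := by
        intro hbp
        obtain ⟨tb, htb⟩ := head?_eq_cons hbp
        have := norm_inv_mul_add_two_le a b p ta tb hta htb
        omega
      have hbc : FreeGroup.norm (b⁻¹ * c) = FreeGroup.norm b + FreeGroup.norm c := by
        apply norm_inv_mul_of_head_ne
        intro q hq hcq
        rw [hpcc] at hcq
        obtain rfl : q = p := by injection hcq.symm
        exact hbp hq
      have hc0 : FreeGroup.norm c = 0 := by omega
      have : c = 1 := FreeGroup.norm_eq_zero.mp hc0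
      rw [this] at hpcc
      simp [FreeGroup.toWord_one] at hpcc
    · push_neg at hpc
      exact norm_inv_mul_of_head_ne a c hpc
  rw [e6, e7, key, h1]
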